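/- (Most atoms are good.) There is an absolute constant K > 0 with the following property. Assume the setting and conclusions of the full regularity lemma: a hypergraph system V = (J, (V_j)_{j∈J}, d, H_d) with H_j := ∂H_{j+1} for 0 ≤ j < d, numbers M_d ≤ F(M_d) ≤ M_{d−1} ≤ … ≤ M_0 ≤ F(M_0) for a growth function F, σ-algebras B_e ⊆ A_e for e ∈ H_d, and σ-algebras B_f ⊆ B'_f ⊆ A_f for f ∈ H_j (0 ≤ j < d), satisfying ℰ_{E_e}(∨_{f∈∂e} B'_f) − ℰ_{E_e}(∨_{f∈∂e} B_f) ≤ 1/F(M_j)² for all 1 ≤ j ≤ d, e ∈ H_j, E_e ∈ B_e. Then for every 0 ≤ j ≤ d, every e ∈ H_j, and every atom A_e of B_e, the set B_{e,A_e} defined below satisfies E(1_{A_e} 1_{B_{e,A_e}}) ≤ K / log F(M_j). Here B_{e,A_e} is the union of all sets ∩_{f⊊e} A_f, where each A_f ranges over atoms of B_f, for which at least one of the following two conditions fails: (i) E(1_{A_e} ∏_{f∈∂e} 1_{A_f}) ≥ (1/log F(M_j)) E(∏_{f∈∂e} 1_{A_f}); (ii) E(|E(1_{A_e} | ∨_{f∈∂e}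 B'_f) − E(1_{A_e} | ∨_{f∈∂e} B_f)|² ∏_{f⊊e} 1_{A_f}) ≤ (1/F(M_j)) E(∏_{f⊊e} 1_{A_f}). -/

import Mathlib

open scoped Classical BigOperators MeasureTheory

noncomputable section

/-- Average of a real-valued function over a finite type. -/
def avg {α : Type*} [Fintype α] (f : α → ℝ) : ℝ :=
  (∑ x, f x) / (Fintype.card α)

/-- Real-valued indicator function of a set. -/
def ind {α : Type*} (E : Set α) (x : α) : ℝ := if x ∈ E then 1 else 0

/-- Average of `f` over the set `A`. -/
def avgOn {α : Type*} [Fintype α] (A : Set α) (f : α → ℝ) : ℝ :=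
  (∑ x ∈ Finset.univ.filter (· ∈ A), f x) / ((Finset.univ.filter (· ∈ A)).card)

/-- The smallest set of the σ-algebra `m` containing `x`. -/
def atomAt {α : Type*} (m : MeasurableSpace α) (x : α) : Set α :=
  ⋂₀ {s | MeasurableSet[m] s ∧ x ∈ s}

/-- Conditional expectation: the average of `f` over the smallest `m`-set containing `x`. -/
def cexp {α : Type*} [Fintype α] (m : MeasurableSpace α) (f : α → ℝ) (x : α) : ℝ :=
  avgOn (atomAt m x) f

/-- The `E`-energy of a σ-algebra. -/
def energy {α : Type*} [Fintype α] (E : Set α) (m : MeasurableSpace α) : ℝ :=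
  avg (fun x => (cexp m (ind E) x) ^ 2)

/-- Complexity: the least number of sets needed to generate `m` as a σ-algebra. -/
def complexity {α : Type*} (m : MeasurableSpace α) : ℕ :=
  sInf {n | ∃ S : Finset (Set α), S.card = n ∧ MeasurableSpace.generateFrom (↑S : Set (Set α)) = m}

/-- The σ-algebra `A_e` of sets depending only on the coordinates indexed by `e`. -/
def cylAlg {J : Type*} (V : J → Type*) (e : Finset J) : MeasurableSpace (∀ j, V j) :=
  MeasurableSpace.comap (fun x (j : e) => x j.1) ⊤

/-- The skeleton `∂e = {f ⊊ e : |f| = |e| - 1}`. -/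
def skel {J : Type*} (e : Finset J) : Finset (Finset J) :=
  e.image (fun j => e.erase j)

/-- The boundary `∂H` of a hypergraph. -/
def hbd {J : Type*} (H : Finset (Finset J)) : Finset (Finset J) :=
  H.biUnion skel

/-- The `e`-discrepancy of `E` relative to the σ-algebra `m`. -/
def disc {J : Type*} [Fintype J] (V : J → Type*) [∀ j, Fintype (V j)]
    (e : Finset J) (E : Set (∀ j, V j)) (m : MeasurableSpace (∀ j, V j)) : ℝ :=
  sSup { r | ∃ Ef : Finset J → Set (∀ j, V j),
    (∀ f ∈ skel e, MeasurableSet[cylAlg V f] (Ef f)) ∧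
    r = |avg (fun x => (ind E x - cexp m (ind E) x) * ∏ f ∈ skel e, ind (Ef f) x)| }

/-- A growth function: increasing on positives and at least `1 + x`. -/
def IsGrowth (F : ℝ → ℝ) : Prop :=
  (∀ x y, 0 < x → x < y → F x < F y) ∧ ∀ x, 0 < x → 1 + x ≤ F x

/-- An atom of a σ-algebra on a finite set: a minimal non-empty measurable set. -/
def IsAtomOf {α : Type*} (m : MeasurableSpace α) (A : Set α) : Prop :=
  MeasurableSet[m] A ∧ A.Nonempty ∧ ∀ s, MeasurableSet[m] s → s ⊆ A → s = ∅ ∨ s = A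

end

noncomputable section

/-- The bad set `B_{e,A_e}`: the union of all sets `⋂_{f⊊e} A_f`, with each `A_f` an atom
of `B_f`, for which the largeness estimate (i) or the regularity estimate (ii) fails. -/
def badSet {J : Type} [Fintype J] (V : J → Type) [∀ i, Fintype (V i)]
    (B B' : Finset J → MeasurableSpace (∀ i, V i)) (F : ℝ → ℝ) (Mj : ℝ)
    (e : Finset J) (Ae : Set (∀ i, V i)) : Set (∀ i, V i) :=
  {x | ∃ A : Finset J → Set (∀ i, V i),
    (∀ f, f ⊂ e → IsAtomOf (B f) (A f)) ∧
    ¬ (((1 / Real.log (F Mj)) * avg (fun y => ∏ f ∈ skel e, ind (A f) y)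
          ≤ avg (fun y => ind Ae y * ∏ f ∈ skel e, ind (A f) y)) ∧
       (avg (fun y => (cexp (⨆ f ∈ skel e, B' f) (ind Ae) y
              - cexp (⨆ f ∈ skel e, B f) (ind Ae) y) ^ 2 * ∏ f ∈ e.ssubsets, ind (A f) y)
          ≤ (1 / F Mj) * avg (fun y => ∏ f ∈ e.ssubsets, ind (A f) y))) ∧
    x ∈ ⋂ (f : Finset J) (_ : f ⊂ e), A f}

end


section HelperLemmas
variable {α : Type*}

lemma mem_atomAt (m : MeasurableSpace α) (x : α) : x ∈ atomAt m x :=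
  Set.mem_sInter.2 fun _ hs => hs.2

lemma atomAt_subset {m : MeasurableSpace α} {x : α} {s : Set α}
    (hs : MeasurableSet[m] s) (hx : x ∈ s) : atomAt m x ⊆ s :=
  Set.sInter_subset_of_mem ⟨hs, hx⟩

lemma measurableSet_atomAt [Finite α] (m : MeasurableSpace α) (x : α) :
    MeasurableSet[m] (atomAt m x) :=
  MeasurableSet.sInter (Set.to_countable _) fun _ hs => hs.1

lemma atomAt_eq_of_mem {m : MeasurableSpace α} {x y : α} (h : y ∈ atomAt m x) :
    atomAt m y = atomAt m x := by
  have key : ∀ s : Set α, MeasurableSet[m] s → (x ∈ s ↔ y ∈ s) := by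
    intro s hs
    constructor
    · intro hx; exact atomAt_subset hs hx h
    · intro hy
      by_contra hx
      exact (atomAt_subset hs.compl hx h) hy
  apply Set.Subset.antisymm
  · exact Set.subset_sInter fun s hs => atomAt_subset hs.1 ((key s hs.1).1 hs.2)
  · exact Set.subset_sInter fun s hs => atomAt_subset hs.1 ((key s hs.1).2 hs.2)

lemma atomAt_mono {m m' : MeasurableSpace α} (h : m ≤ m') (x : α) :
    atomAt m' x ⊆ atomAt m x :=
  Set.subset_sInter fun s hs => Set.sInter_subset_of_mem ⟨h s hs.1, hs.2⟩

lemma IsAtomOf.eq_atomAt [Finite α] {m : MeasurableSpace α} {A : Set α} {x : α}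
    (hA : IsAtomOf m A) (hx : x ∈ A) : A = atomAt m x := by
  rcases hA.2.2 (atomAt m x) (measurableSet_atomAt m x) (atomAt_subset hA.1 hx) with h | h
  · exact absurd (h ▸ mem_atomAt m x) (Set.notMem_empty x)
  · exact h.symm

variable [Fintype α]

lemma cexp_congr_atom {m : MeasurableSpace α} {x y : α} (h : y ∈ atomAt m x) (f : α → ℝ) :
    cexp m f y = cexp m f x := by
  rw [cexp, cexp, atomAt_eq_of_mem h]

lemma sum_cexp_mul (m : MeasurableSpace α) (f h : α → ℝ)
    (hh : ∀ x y, y ∈ atomAt m x → h y = h x) :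
    ∑ x, cexp m f x * h x = ∑ x, f x * h x := by
  classical
  rw [← Finset.sum_fiberwise_of_maps_to (g := atomAt m) (t := Finset.univ.image (atomAt m))
        (fun x _ => Finset.mem_image_of_mem _ (Finset.mem_univ x)) (fun x => cexp m f x * h x),
      ← Finset.sum_fiberwise_of_maps_to (g := atomAt m) (t := Finset.univ.image (atomAt m))
        (fun x _ => Finset.mem_image_of_mem _ (Finset.mem_univ x)) (fun x => f x * h x)]
  apply Finset.sum_congr rfl
  intro a ha
  obtain ⟨x₀, -, rfl⟩ := Finset.mem_image.1 ha
  have hfib : Finset.univ.filter (fun x => atomAt m x = atomAt m x₀)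
      = Finset.univ.filter (· ∈ atomAt m x₀) := by
    apply Finset.filter_congr
    intro x _
    constructor
    · intro hx; rw [← hx]; exact mem_atomAt m x
    · intro hx; exact atomAt_eq_of_mem hx
  rw [hfib]
  have hcexp : ∀ x ∈ Finset.univ.filter (· ∈ atomAt m x₀), cexp m f x = cexp m f x₀ :=
    fun x hx => cexp_congr_atom (Finset.mem_filter.1 hx).2 f
  have hhc : ∀ x ∈ Finset.univ.filter (· ∈ atomAt m x₀), h x = h x₀ :=
    fun x hx => hh x₀ x (Finset.mem_filter.1 hx).2
  calc ∑ x ∈ Finset.univ.filter (· ∈ atomAt m x₀), cexp m f x * h x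
      = ∑ x ∈ Finset.univ.filter (· ∈ atomAt m x₀), cexp m f x₀ * h x₀ := by
        apply Finset.sum_congr rfl; intro x hx; rw [hcexp x hx, hhc x hx]
    _ = (Finset.univ.filter (· ∈ atomAt m x₀)).card * (cexp m f x₀ * h x₀) := by
        rw [Finset.sum_const, nsmul_eq_mul]
    _ = (∑ x ∈ Finset.univ.filter (· ∈ atomAt m x₀), f x) * h x₀ := by
        rw [cexp, avgOn]
        have hcard : ((Finset.univ.filter (· ∈ atomAt m x₀)).card : ℝ) ≠ 0 := by
          have : x₀ ∈ Finset.univ.filter (· ∈ atomAt m x₀) := by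
            simp [mem_atomAt m x₀]
          exact Nat.cast_ne_zero.2 (Finset.card_ne_zero_of_mem this)
        rw [div_mul_eq_mul_div, mul_comm, div_mul_cancel₀ _ hcard]
    _ = ∑ x ∈ Finset.univ.filter (· ∈ atomAt m x₀), f x * h x := by
        rw [Finset.sum_mul]
        apply Finset.sum_congr rfl; intro x hx; rw [hhc x hx]

lemma sum_sq_cexp_diff {m m' : MeasurableSpace α} (hle : m ≤ m') (f : α → ℝ) :
    ∑ x, (cexp m' f x - cexp m f x) ^ 2
      = ∑ x, (cexp m' f x) ^ 2 - ∑ x, (cexp m f x) ^ 2 := by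
  have h1 : ∑ x, cexp m f x * cexp m f x = ∑ x, f x * cexp m f x :=
    sum_cexp_mul m f _ (fun x y hy => cexp_congr_atom hy f)
  have h2 : ∑ x, cexp m' f x * cexp m f x = ∑ x, f x * cexp m f x :=
    sum_cexp_mul m' f _ (fun x y hy => cexp_congr_atom (atomAt_mono hle x hy) f)
  have key : ∑ x, cexp m' f x * cexp m f x = ∑ x, cexp m f x * cexp m f x := h2.trans h1.symm
  have expand : ∀ x : α, (cexp m' f x - cexp m f x) ^ 2
      = (cexp m' f x) ^ 2 - 2 * (cexp m' f x * cexp m f x) + cexp m f x * cexp m f x := by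
    intro x; ring
  simp_rw [expand]
  rw [Finset.sum_add_distrib, Finset.sum_sub_distrib, ← Finset.mul_sum, key]
  have : ∑ x, cexp m f x * cexp m f x = ∑ x, (cexp m f x) ^ 2 := by
    simp_rw [sq]
  rw [this]; ring

omit [Fintype α] in
lemma ind_eq_ite {E : Set α} {x : α} {c : Prop} [Decidable c] (h : x ∈ E ↔ c) :
    ind E x = if c then 1 else 0 := by
  rw [ind]
  by_cases hc : c
  · rw [if_pos (h.2 hc), if_pos hc]
  · rw [if_neg (fun hx => hc (h.1 hx)), if_neg hc]

lemma sum_ind_label {β : Type*} (L : α → β) (g : α → ℝ) (P : β → Prop) [DecidablePred P] :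
    ∑ y, g y * ind {z | P (L z)} y
      = ∑ t ∈ (Finset.univ.image L).filter P, ∑ y, g y * ind {z | L z = t} y := by
  rw [Finset.sum_comm]
  apply Finset.sum_congr rfl
  intro y _
  rw [← Finset.mul_sum]
  congr 1
  have h : ∀ t : β, ind {z | L z = t} y = if L y = t then (1:ℝ) else 0 := fun t => rfl
  simp_rw [h]
  rw [Finset.sum_ite_eq]
  simp only [Finset.mem_filter, Finset.mem_image_of_mem L (Finset.mem_univ y), true_and]
  exact ind_eq_ite Iff.rfl

lemma sum_label_total {β : Type*} (L : α → β) (g : α → ℝ) :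
    ∑ t ∈ Finset.univ.image L, ∑ y, g y * ind {z | L z = t} y = ∑ y, g y := by
  rw [Finset.sum_comm]
  apply Finset.sum_congr rfl
  intro y _
  have h : ∀ t : β, ind {z | L z = t} y = if L y = t then (1:ℝ) else 0 := fun t => rfl
  simp_rw [h]
  rw [← Finset.mul_sum, Finset.sum_ite_eq]
  simp [Finset.mem_image_of_mem L (Finset.mem_univ y)]

omit [Fintype α] in
lemma ind_nonneg {E : Set α} {x : α} : 0 ≤ ind E x := by
  unfold ind; split <;> norm_num

omit [Fintype α] in
lemma ind_le_one {E : Set α} {x : α} : ind E x ≤ 1 := by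
  unfold ind; split <;> norm_num

omit [Fintype α] in
lemma prod_ind_atom_eq {J : Type*} (B : Finset J → MeasurableSpace α)
    (fs : Finset (Finset J)) (x y : α) :
    (∏ f ∈ fs, ind (atomAt (B f) x) y)
      = ind {z | (fun f => if f ∈ fs then atomAt (B f) z else (∅ : Set α))
          = fun f => if f ∈ fs then atomAt (B f) x else (∅ : Set α)} y := by
  by_cases h : (fun f => if f ∈ fs then atomAt (B f) y else (∅ : Set α))
      = (fun f => if f ∈ fs then atomAt (B f) x else (∅ : Set α))
  · have hmem : ∀ f ∈ fs, y ∈ atomAt (B f) x := by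
      intro f hf
      have := congrFun h f
      rw [if_pos hf, if_pos hf] at this
      rw [← this]; exact mem_atomAt _ y
    have hr : ind {z | (fun f => if f ∈ fs then atomAt (B f) z else (∅ : Set α))
        = fun f => if f ∈ fs then atomAt (B f) x else (∅ : Set α)} y = 1 := by
      rw [ind]; exact if_pos h
    rw [hr]
    exact Finset.prod_eq_one fun f hf => by rw [ind, if_pos (hmem f hf)]
  · have hr : ind {z | (fun f => if f ∈ fs then atomAt (B f) z else (∅ : Set α))
        = fun f => if f ∈ fs then atomAt (B f) x else (∅ : Set α)} y = 0 := by
      rw [ind]; exact if_neg h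
    rw [hr]
    have : ∃ f ∈ fs, atomAt (B f) y ≠ atomAt (B f) x := by
      by_contra hcon
      push_neg at hcon
      apply h
      funext f
      by_cases hf : f ∈ fs
      · rw [if_pos hf, if_pos hf, hcon f hf]
      · rw [if_neg hf, if_neg hf]
    obtain ⟨f, hf, hne⟩ := this
    exact Finset.prod_eq_zero hf (by rw [ind, if_neg fun hy => hne (atomAt_eq_of_mem hy)])

omit [Fintype α] in
lemma mem_skel_ssubset {J : Type*} {e f : Finset J} (h : f ∈ skel e) : f ⊂ e := by
  rw [skel, Finset.mem_image] at h
  obtain ⟨j, hj, rfl⟩ := h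
  exact Finset.erase_ssubset hj

omit [Fintype α] in
lemma hbd_iter_card {J : Type*} (H : Finset (Finset J)) {d : ℕ}
    (hH : ∀ e ∈ H, e.card = d) : ∀ k, ∀ e ∈ hbd^[k] H, e.card + k = d := by
  intro k
  induction k with
  | zero => simpa using fun e he => hH e he
  | succ n ih =>
    intro e he
    rw [Function.iterate_succ_apply', hbd, Finset.mem_biUnion] at he
    obtain ⟨e', he', hee⟩ := he
    have h1 := ih e' he'
    rw [skel, Finset.mem_image] at hee
    obtain ⟨a, ha, rfl⟩ := hee
    have := Finset.card_erase_add_one ha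
    omega

lemma sum_lt_of_avg_lt [Nonempty α] {f g : α → ℝ} {r : ℝ}
    (h : avg f < r * avg g) : ∑ x, f x < r * ∑ x, g x := by
  have hN : (0:ℝ) < Fintype.card α := by exact_mod_cast Fintype.card_pos
  rw [avg, avg, ← mul_div_assoc] at h
  exact lt_of_mul_lt_mul_right ((div_lt_div_iff₀ hN hN).1 h) hN.le

lemma mul_sum_lt_of_lt_avg [Nonempty α] {f g : α → ℝ} {r : ℝ}
    (h : r * avg g < avg f) : r * ∑ x, g x < ∑ x, f x := by
  have hN : (0:ℝ) < Fintype.card α := by exact_mod_cast Fintype.card_pos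
  rw [avg, avg, ← mul_div_assoc] at h
  exact lt_of_mul_lt_mul_right ((div_lt_div_iff₀ hN hN).1 h) hN.le

lemma branch_bound {β : Type*} (L : α → β) (g h : α → ℝ) (P : β → Prop) (r : ℝ)
    (hh : ∀ y, 0 ≤ h y) (hr : 0 ≤ r)
    (hbound : ∀ x₀ : α, ¬ P (L x₀) →
      ∑ y, g y * ind {z | L z = L x₀} y ≤ r * ∑ y, h y * ind {z | L z = L x₀} y) :
    ∑ y, g y * ind {z | ¬ P (L z)} y ≤ r * ∑ y, h y := by
  rw [sum_ind_label L g (fun t => ¬ P t)]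
  refine (Finset.sum_le_sum (g := fun t => r * ∑ y, h y * ind {z | L z = t} y)
      fun t ht => ?_).trans ?_
  · rw [Finset.mem_filter] at ht
    obtain ⟨x₀, -, rfl⟩ := Finset.mem_image.1 ht.1
    exact hbound x₀ ht.2
  · refine (Finset.sum_le_sum_of_subset_of_nonneg (Finset.filter_subset _ _)
      fun t _ _ => mul_nonneg hr
        (Finset.sum_nonneg fun y _ => mul_nonneg (hh y) ind_nonneg)).trans ?_
    rw [← Finset.mul_sum, sum_label_total L h]

end HelperLemmas

/-- **Most atoms are good.**
In the setting and with the conclusions of the full regularity lemma (with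
`H_j := ∂H_{j+1}` realized as `hbd^[d - j] H`), for every `0 ≤ j ≤ d`, every `e ∈ H_j`
and every atom `A_e` of `B_e`, the bad set `B_{e,A_e}` satisfies
`E(1_{A_e} 1_{B_{e,A_e}}) ≤ K / log F(M_j)` for an absolute constant `K > 0`. -/
theorem most_atoms_are_good :
    ∃ K : ℝ, 0 < K ∧
    ∀ (J : Type) [Fintype J]
      (V : J → Type) [∀ i, Fintype (V i)] [∀ i, Nonempty (V i)]
      (d : ℕ), 1 ≤ d →
    ∀ (H : Finset (Finset J)), (∀ e ∈ H, e.card = d) →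
    ∀ F : ℝ → ℝ, IsGrowth F →
    ∀ M : ℕ → ℝ, 0 < M d →
      (∀ j ≤ d, M j ≤ F (M j)) → (∀ j < d, F (M (j + 1)) ≤ M j) →
    ∀ (B B' : Finset J → MeasurableSpace (∀ i, V i)),
      (∀ e ∈ H, B e ≤ cylAlg V e) →
      (∀ j < d, ∀ f ∈ hbd^[d - j] H, B f ≤ B' f ∧ B' f ≤ cylAlg V f) →
      (∀ j, 1 ≤ j → j ≤ d → ∀ e ∈ hbd^[d - j] H,
        ∀ E : Set (∀ i, V i), MeasurableSet[B e] E →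
          energy E (⨆ f ∈ skel e, B' f) - energy E (⨆ f ∈ skel e, B f)
            ≤ 1 / (F (M j)) ^ 2) →
    ∀ j ≤ d, ∀ e ∈ hbd^[d - j] H, ∀ Ae : Set (∀ i, V i), IsAtomOf (B e) Ae →
      avg (fun x => ind Ae x * ind (badSet V B B' F (M j) e Ae) x)
        ≤ K / Real.log (F (M j)) := by
  refine ⟨2, by norm_num, ?_⟩
  intro J _ V _ _ d hd H hH F hF M hMd hMF hFM B B' hBe hBB' hE j hj e he Ae hAe
  haveI : Nonempty (∀ i, V i) := Classical.nonempty_pi.2 fun i => inferInstance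
  have hN : (0:ℝ) < (Fintype.card (∀ i, V i) : ℝ) := by exact_mod_cast Fintype.card_pos
  set N : ℝ := ((Fintype.card (∀ i, V i)) : ℝ) with hNdef
  -- positivity of M j
  have hMpos : 0 < M j := by
    have key : ∀ k, k ≤ d → 0 < M (d - k) := by
      intro k
      induction k with
      | zero => intro _; simpa using hMd
      | succ n ih =>
        intro hkd
        have h1 : 0 < M (d - n) := ih (by omega)
        have h2 := hFM (d - (n+1)) (by omega)
        rw [show d - (n+1) + 1 = d - n from by omega] at h2
        have h3 := hF.2 _ h1
        linarith
    have := key (d - j) (by omega)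
    rwa [show d - (d - j) = j from by omega] at this
  have hF1 : 1 < F (M j) := by have := hF.2 _ hMpos; linarith
  have hc : 0 < Real.log (F (M j)) := Real.log_pos hF1
  have hcF : Real.log (F (M j)) ≤ F (M j) := by
    have := Real.log_le_sub_one_of_pos (show (0:ℝ) < F (M j) by linarith)
    linarith
  -- energy bound
  have hΔ2 : ∑ y, (cexp (⨆ f ∈ skel e, B' f) (ind Ae) y
        - cexp (⨆ f ∈ skel e, B f) (ind Ae) y) ^ 2 ≤ 1 / (F (M j)) ^ 2 * N := by
    rcases Nat.eq_zero_or_pos j with rfl | hj1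
    · have hcard := hbd_iter_card H hH (d - 0) e he
      have he0 : e = ∅ := Finset.card_eq_zero.1 (by omega)
      have hsk : skel e = ∅ := by rw [he0]; simp [skel]
      rw [hsk]
      simp only [Finset.notMem_empty, iSup_false, iSup_bot, sub_self]
      simp only [ne_eq, OfNat.ofNat_ne_zero, not_false_eq_true, zero_pow,
        Finset.sum_const_zero]
      positivity
    · have hmm' : (⨆ f ∈ skel e, B f) ≤ ⨆ f ∈ skel e, B' f := by
        refine iSup₂_mono fun f hf => ?_
        have hfmem : f ∈ hbd^[d - (j-1)] H := by
          rw [show d - (j-1) = (d - j) + 1 from by omega, Function.iterate_succ_apply', hbd,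
            Finset.mem_biUnion]
          exact ⟨e, he, hf⟩
        exact (hBB' (j-1) (by omega) f hfmem).1
      have hEn := hE j hj1 hj e he Ae hAe.1
      rw [sum_sq_cexp_diff hmm' (ind Ae)]
      have heq : energy Ae (⨆ f ∈ skel e, B' f) - energy Ae (⨆ f ∈ skel e, B f)
          = (∑ x, (cexp (⨆ f ∈ skel e, B' f) (ind Ae) x) ^ 2
            - ∑ x, (cexp (⨆ f ∈ skel e, B f) (ind Ae) x) ^ 2) / N := by
        rw [energy, energy, avg, avg, div_sub_div_same]
      rw [heq] at hEn
      rw [div_le_iff₀ hN] at hEn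
      exact hEn
  -- labels and predicates
  set Lsk : (∀ i, V i) → (Finset J → Set (∀ i, V i)) :=
    fun x f => if f ∈ skel e then atomAt (B f) x else ∅ with hLsk
  set Lss : (∀ i, V i) → (Finset J → Set (∀ i, V i)) :=
    fun x f => if f ∈ e.ssubsets then atomAt (B f) x else ∅ with hLss
  set Q1 : (Finset J → Set (∀ i, V i)) → Prop := fun t =>
    1 / Real.log (F (M j)) * avg (fun y => ∏ f ∈ skel e, ind (t f) y)
      ≤ avg (fun y => ind Ae y * ∏ f ∈ skel e, ind (t f) y) with hQ1
  set Q2 : (Finset J → Set (∀ i, V i)) → Prop := fun t =>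
    avg (fun y => (cexp (⨆ f ∈ skel e, B' f) (ind Ae) y
        - cexp (⨆ f ∈ skel e, B f) (ind Ae) y) ^ 2 * ∏ f ∈ e.ssubsets, ind (t f) y)
      ≤ 1 / F (M j) * avg (fun y => ∏ f ∈ e.ssubsets, ind (t f) y) with hQ2
  -- pointwise bound
  have key : ∀ x, ind Ae x * ind (badSet V B B' F (M j) e Ae) x
      ≤ ind Ae x * ind {z | ¬ Q1 (Lsk z)} x + ind Ae x * ind {z | ¬ Q2 (Lss z)} x := by
    intro x
    by_cases hx : x ∈ badSet V B B' F (M j) e Ae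
    · obtain ⟨A, hAatom, hcond, hmem⟩ := hx
      have hmem' : ∀ f, f ⊂ e → x ∈ A f := fun f hf => Set.mem_iInter₂.1 hmem f hf
      have hAeq : ∀ f, f ⊂ e → A f = atomAt (B f) x :=
        fun f hf => (hAatom f hf).eq_atomAt (hmem' f hf)
      have hnot : ¬ (Q1 (Lsk x) ∧ Q2 (Lss x)) := by
        rintro ⟨q1, q2⟩
        apply hcond
        have h1 : (fun y => ∏ f ∈ skel e, ind (A f) y)
            = fun y => ∏ f ∈ skel e, ind (Lsk x f) y := by
          funext y
          refine Finset.prod_congr rfl fun f hf => ?_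
          rw [hAeq f (mem_skel_ssubset hf)]
          simp only [hLsk, if_pos hf]
        have h2 : (fun y => ind Ae y * ∏ f ∈ skel e, ind (A f) y)
            = fun y => ind Ae y * ∏ f ∈ skel e, ind (Lsk x f) y := by
          funext y
          rw [show (∏ f ∈ skel e, ind (A f) y) = ∏ f ∈ skel e, ind (Lsk x f) y from
            congrFun h1 y]
        have h3 : (fun y => ∏ f ∈ e.ssubsets, ind (A f) y)
            = fun y => ∏ f ∈ e.ssubsets, ind (Lss x f) y := by
          funext y
          refine Finset.prod_congr rfl fun f hf => ?_
          rw [hAeq f (Finset.mem_ssubsets.1 hf)]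
          simp only [hLss, if_pos hf]
        have h4 : (fun y => (cexp (⨆ f ∈ skel e, B' f) (ind Ae) y
              - cexp (⨆ f ∈ skel e, B f) (ind Ae) y) ^ 2 * ∏ f ∈ e.ssubsets, ind (A f) y)
            = fun y => (cexp (⨆ f ∈ skel e, B' f) (ind Ae) y
              - cexp (⨆ f ∈ skel e, B f) (ind Ae) y) ^ 2 * ∏ f ∈ e.ssubsets, ind (Lss x f) y := by
          funext y
          rw [show (∏ f ∈ e.ssubsets, ind (A f) y) = ∏ f ∈ e.ssubsets, ind (Lss x f) y from
            congrFun h3 y]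
        constructor
        · rw [h1, h2]; exact q1
        · rw [h3, h4]; exact q2
      rcases not_and_or.1 hnot with h1 | h2
      · have e1 : ind {z | ¬ Q1 (Lsk z)} x = 1 := if_pos h1
        have hb : ind (badSet V B B' F (M j) e Ae) x ≤ 1 := ind_le_one
        have ha : (0:ℝ) ≤ ind Ae x := ind_nonneg
        have h2' : (0:ℝ) ≤ ind Ae x * ind {z | ¬ Q2 (Lss z)} x :=
          mul_nonneg ind_nonneg ind_nonneg
        rw [e1]
        nlinarith
      · have e1 : ind {z | ¬ Q2 (Lss z)} x = 1 := if_pos h2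
        have hb : ind (badSet V B B' F (M j) e Ae) x ≤ 1 := ind_le_one
        have ha : (0:ℝ) ≤ ind Ae x := ind_nonneg
        have h1' : (0:ℝ) ≤ ind Ae x * ind {z | ¬ Q1 (Lsk z)} x :=
          mul_nonneg ind_nonneg ind_nonneg
        rw [e1]
        nlinarith
    · have e0 : ind (badSet V B B' F (M j) e Ae) x = 0 := if_neg hx
      rw [e0, mul_zero]
      exact add_nonneg (mul_nonneg ind_nonneg ind_nonneg) (mul_nonneg ind_nonneg ind_nonneg)
  -- branch 1
  have branch1 : ∑ x, ind Ae x * ind {z | ¬ Q1 (Lsk z)} x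
      ≤ 1 / Real.log (F (M j)) * ∑ _y : (∀ i, V i), (1:ℝ) := by
    apply branch_bound Lsk (fun y => ind Ae y) (fun _ => (1:ℝ)) Q1 (1 / Real.log (F (M j)))
      (fun y => zero_le_one) (by positivity)
    intro x₀ hq1
    have hp : ∀ y, ind {z | Lsk z = Lsk x₀} y = ∏ f ∈ skel e, ind (Lsk x₀ f) y := by
      intro y
      have h1 : (∏ f ∈ skel e, ind (Lsk x₀ f) y)
          = ∏ f ∈ skel e, ind (atomAt (B f) x₀) y := by
        refine Finset.prod_congr rfl fun f hf => ?_
        simp only [hLsk, if_pos hf]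
      rw [h1, prod_ind_atom_eq B (skel e) x₀ y]
    rw [hQ1] at hq1
    simp only [not_le] at hq1
    have hs := sum_lt_of_avg_lt hq1
    simp_rw [hp, one_mul]
    exact hs.le
  -- branch 2
  have branch2 : ∑ x, ind Ae x * ind {z | ¬ Q2 (Lss z)} x
      ≤ F (M j) * ∑ y, (cexp (⨆ f ∈ skel e, B' f) (ind Ae) y
          - cexp (⨆ f ∈ skel e, B f) (ind Ae) y) ^ 2 := by
    apply branch_bound Lss (fun y => ind Ae y)
      (fun y => (cexp (⨆ f ∈ skel e, B' f) (ind Ae) y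
        - cexp (⨆ f ∈ skel e, B f) (ind Ae) y) ^ 2) Q2 (F (M j))
      (fun y => by positivity) (by linarith)
    intro x₀ hq2
    have hp : ∀ y, ind {z | Lss z = Lss x₀} y = ∏ f ∈ e.ssubsets, ind (Lss x₀ f) y := by
      intro y
      have h1 : (∏ f ∈ e.ssubsets, ind (Lss x₀ f) y)
          = ∏ f ∈ e.ssubsets, ind (atomAt (B f) x₀) y := by
        refine Finset.prod_congr rfl fun f hf => ?_
        simp only [hLss, if_pos hf]
      rw [h1, prod_ind_atom_eq B e.ssubsets x₀ y]
    rw [hQ2] at hq2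
    simp only [not_le] at hq2
    have hs := mul_sum_lt_of_lt_avg hq2
    have hFm : (0:ℝ) < F (M j) := by linarith
    calc ∑ y, ind Ae y * ind {z | Lss z = Lss x₀} y
        ≤ ∑ y, ind {z | Lss z = Lss x₀} y := by
          apply Finset.sum_le_sum
          intro y _
          have h1 : (0:ℝ) ≤ ind {z | Lss z = Lss x₀} y := ind_nonneg
          have h2 : ind Ae y ≤ 1 := ind_le_one
          have h3 : (0:ℝ) ≤ ind Ae y := ind_nonneg
          nlinarith
      _ = ∑ y, ∏ f ∈ e.ssubsets, ind (Lss x₀ f) y :=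
          Finset.sum_congr rfl fun y _ => hp y
      _ ≤ F (M j) * ∑ y, (cexp (⨆ f ∈ skel e, B' f) (ind Ae) y
            - cexp (⨆ f ∈ skel e, B f) (ind Ae) y) ^ 2
              * ∏ f ∈ e.ssubsets, ind (Lss x₀ f) y := by
          have heq : ∑ y, ∏ f ∈ e.ssubsets, ind (Lss x₀ f) y
              = F (M j) * (1 / F (M j) * ∑ y, ∏ f ∈ e.ssubsets, ind (Lss x₀ f) y) := by
            field_simp
          rw [heq]
          exact (mul_lt_mul_of_pos_left hs hFm).le
      _ = F (M j) * ∑ y, (cexp (⨆ f ∈ skel e, B' f) (ind Ae) y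
            - cexp (⨆ f ∈ skel e, B f) (ind Ae) y) ^ 2
              * ind {z | Lss z = Lss x₀} y := by
          congr 1
          exact Finset.sum_congr rfl fun y _ => by rw [hp y]
  -- conclusion
  have hones : ∑ _y : (∀ i, V i), (1:ℝ) = N := by
    rw [Finset.sum_const, Finset.card_univ, nsmul_eq_mul, mul_one, hNdef]
  have hb1 : ∑ x, ind Ae x * ind {z | ¬ Q1 (Lsk z)} x
      ≤ 1 / Real.log (F (M j)) * N := by rw [← hones]; exact branch1
  have hb2 : ∑ x, ind Ae x * ind {z | ¬ Q2 (Lss z)} x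
      ≤ 1 / Real.log (F (M j)) * N := by
    refine branch2.trans ?_
    have h1 : F (M j) * ∑ y, (cexp (⨆ f ∈ skel e, B' f) (ind Ae) y
          - cexp (⨆ f ∈ skel e, B f) (ind Ae) y) ^ 2
        ≤ F (M j) * (1 / (F (M j)) ^ 2 * N) :=
      mul_le_mul_of_nonneg_left hΔ2 (by linarith)
    have h2 : F (M j) * (1 / (F (M j)) ^ 2 * N) = 1 / F (M j) * N := by
      field_simp
    have h3 : 1 / F (M j) * N ≤ 1 / Real.log (F (M j)) * N :=
      mul_le_mul_of_nonneg_right (one_div_le_one_div_of_le hc hcF) hN.le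
    linarith
  have step0 : ∑ x, ind Ae x * ind (badSet V B B' F (M j) e Ae) x
      ≤ (∑ x, ind Ae x * ind {z | ¬ Q1 (Lsk z)} x)
        + ∑ x, ind Ae x * ind {z | ¬ Q2 (Lss z)} x := by
    rw [← Finset.sum_add_distrib]
    exact Finset.sum_le_sum fun x _ => key x
  rw [avg, div_le_div_iff₀ hN hc]
  have hlog : (∑ x, ind Ae x * ind (badSet V B B' F (M j) e Ae) x)
      ≤ 2 * (1 / Real.log (F (M j)) * N) := by linarith
  have hfin : 2 * (1 / Real.log (F (M j)) * N) * Real.log (F (M j)) = 2 * N := by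
    field_simp
  nlinarith [mul_le_mul_of_nonneg_right hlog hc.le]
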